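/- Let p ∈ [1,2], r ∈ [2,∞] with 1/p = 1/2 + 1/r, p' = p/(p-1), and let A be a linear operator on functions on ℤᵈ. Suppose ‖W₁ A W₂‖_{B(ℓ²)} ≤ C ‖W₁‖_{ℓʳ} ‖W₂‖_{ℓʳ} for all W₁, W₂ ∈ ℓʳ(ℤᵈ). Then ‖A‖_{B(ℓᵖ, ℓᵖ')} ≤ C. -/

import Mathlib

open MeasureTheory
open scoped ENNReal

private lemma elp {α : Type*} [MeasurableSpace α] [MeasurableSingletonClass α] [DecidableEq α]
    {q : ℝ≥0∞} (hq0 : q ≠ 0) (hqt : q ≠ ∞) (f : α → ℂ) :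
    eLpNorm f q (Measure.count : Measure α)
      = (∑' x, (‖f x‖₊ : ℝ≥0∞) ^ q.toReal) ^ (1/q.toReal) := by
  simp_rw [eLpNorm_eq_lintegral_rpow_enorm_toReal hq0 hqt, lintegral_count, enorm_eq_nnnorm]

private lemma elp_ind {α : Type*} [MeasurableSpace α] [MeasurableSingletonClass α] [DecidableEq α]
    {q : ℝ≥0∞} (hq0 : q ≠ 0) (hqt : q ≠ ∞) (x₀ : α) (g : α → ℂ) :
    eLpNorm (fun x => (if x = x₀ then (1:ℂ) else 0) * g x) q (Measure.count : Measure α)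
      = (‖g x₀‖₊ : ℝ≥0∞) := by
  have hq : 0 < q.toReal := ENNReal.toReal_pos hq0 hqt
  rw [elp hq0 hqt]
  have hpt : ∀ x, (‖(if x = x₀ then (1:ℂ) else 0) * g x‖₊ : ℝ≥0∞) ^ q.toReal
      = if x = x₀ then (‖g x₀‖₊ : ℝ≥0∞) ^ q.toReal else 0 := by
    intro x
    by_cases h : x = x₀ <;> simp [h, ENNReal.zero_rpow_of_pos hq]
  rw [tsum_congr hpt, tsum_ite_eq, ← ENNReal.rpow_mul, mul_one_div, div_self hq.ne',
    ENNReal.rpow_one]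

private lemma elp_ind' {α : Type*} [MeasurableSpace α] [MeasurableSingletonClass α] [DecidableEq α]
    {q : ℝ≥0∞} (hq0 : q ≠ 0) (hqt : q ≠ ∞) (x₀ : α) :
    eLpNorm (fun x => (if x = x₀ then (1:ℂ) else 0)) q (Measure.count : Measure α) = 1 := by
  have hq : 0 < q.toReal := ENNReal.toReal_pos hq0 hqt
  rw [elp hq0 hqt]
  have hpt : ∀ x, (‖(if x = x₀ then (1:ℂ) else 0)‖₊ : ℝ≥0∞) ^ q.toReal
      = if x = x₀ then (1:ℝ≥0∞) else 0 := by
    intro x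
    by_cases h : x = x₀ <;> simp [h, ENNReal.zero_rpow_of_pos hq]
  rw [tsum_congr hpt, tsum_ite_eq, ENNReal.one_rpow]

theorem weighted_l2_to_lp (d : ℕ) (p r p' : ℝ≥0∞)
    (hp1 : 1 ≤ p) (hp2 : p ≤ 2) (hr : 2 ≤ r)
    (hpr : 1 / p = 1 / 2 + 1 / r) (hp' : 1 / p + 1 / p' = 1)
    (C : ℝ≥0∞)
    (A : ((Fin d → ℤ) → ℂ) →ₗ[ℂ] ((Fin d → ℤ) → ℂ))
    (hA : ∀ (W₁ W₂ u : (Fin d → ℤ) → ℂ),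
      eLpNorm (fun x => W₁ x * A (fun y => W₂ y * u y) x) 2
          (Measure.count : Measure (Fin d → ℤ)) ≤
        C * eLpNorm W₁ r (Measure.count : Measure (Fin d → ℤ)) *
          eLpNorm W₂ r (Measure.count : Measure (Fin d → ℤ)) *
          eLpNorm u 2 (Measure.count : Measure (Fin d → ℤ))) :
    ∀ f : (Fin d → ℤ) → ℂ,
      eLpNorm (A f) p' (Measure.count : Measure (Fin d → ℤ)) ≤
        C * eLpNorm f p (Measure.count : Measure (Fin d → ℤ)) := by
  intro f
  have hp0 : p ≠ 0 := by rintro rfl; simp at hp1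
  have hpt : p ≠ ∞ := (lt_of_le_of_lt hp2 (by norm_num)).ne
  have hr0 : r ≠ 0 := by rintro rfl; exact (by norm_num : ¬ (2:ℝ≥0∞) ≤ 0) hr
  have hp'0 : p' ≠ 0 := by rintro rfl; simp at hp'
  by_cases hC : C = 0
  · have hAf : A f = 0 := by
      funext x
      have h := hA (fun z => if z = x then 1 else 0) (fun _ => 1) f
      rw [hC] at h
      simp only [zero_mul, one_mul] at h
      rw [elp_ind (by norm_num) (by norm_num) x (A f)] at h
      have := le_antisymm h zero_le
      simpa using this
    rw [hAf]
    simpa using zero_le _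
  by_cases hrt : r = ∞
  · -- p = 2, p' = 2
    have hP2 : p = 2 := by
      rw [hrt] at hpr
      simp only [ENNReal.div_top, ENNReal.inv_top, add_zero, one_div] at hpr
      exact inv_inj.mp hpr
    have hP'2 : p' = 2 := by
      rw [hP2] at hp'
      have h12 : (1:ℝ≥0∞) = 1/2 + 1/2 := by
        rw [ENNReal.div_add_div_same, show (1+1 : ℝ≥0∞) = 2 from by norm_num,
          ENNReal.div_self (by norm_num) (by norm_num)]
      have h2 := hp'.trans h12
      have h3 := ENNReal.add_right_inj (a := 1/2) (by norm_num) |>.mp h2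
      rw [one_div, one_div] at h3
      exact inv_inj.mp h3
    have h := hA (fun _ => 1) (fun _ => 1) f
    simp only [one_mul] at h
    have h1 : eLpNorm (fun _ : (Fin d → ℤ) => (1:ℂ)) r Measure.count = 1 := by
      rw [hrt, eLpNorm_exponent_top, eLpNormEssSup_const _ (by simp)]
      simp
    rw [h1, mul_one, mul_one] at h
    rw [hP2, hP'2]
    simpa using h
  -- main case : r ≠ ∞
  set pr := p.toReal with hprdef
  set rr := r.toReal with hrrdef
  have hpr1 : 1 ≤ pr := by
    rw [show (1:ℝ) = (1:ℝ≥0∞).toReal by simp]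
    exact ENNReal.toReal_mono hpt hp1
  have hprpos : 0 < pr := lt_of_lt_of_le one_pos hpr1
  have hrrpos : 0 < rr := ENNReal.toReal_pos hr0 hrt
  have heq1 : 1/pr = 1/2 + 1/rr := by
    have h := congrArg ENNReal.toReal hpr
    rwa [ENNReal.toReal_div, ENNReal.toReal_add (by norm_num)
        (by simp [ENNReal.div_eq_top, hrt, hr0]),
      ENNReal.toReal_div, ENNReal.toReal_div] at h
    -- may need toReal_ofNat
  have hpr2 : pr < 2 := by
    have h2 : (0:ℝ) < 1/rr := by positivity
    have hinv : pr * (1/pr) = 1 := by field_simp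
    nlinarith [hinv, hprpos, h2, heq1]
  have hkey1 : (1 - pr/2) * rr = pr := by
    have h := heq1
    field_simp at h
    nlinarith [hrrpos, hprpos]
  -- the factorization f = W₂ * u
  set F : (Fin d → ℤ) → ℝ≥0∞ := fun x => ((‖f x‖₊ : ℝ≥0∞)) with hFdef
  have hFt : ∀ x, F x ≠ ∞ := fun x => ENNReal.coe_ne_top
  set S := ∑' x, F x ^ pr with hSdef
  set W₂ : (Fin d → ℤ) → ℂ := fun x => ((‖f x‖ ^ (1 - pr/2) : ℝ) : ℂ) with hW₂def
  set u : (Fin d → ℤ) → ℂ :=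
    fun x => if f x = 0 then 0 else ((‖f x‖ ^ (pr/2 - 1) : ℝ) : ℂ) * f x with hudef
  have hfact : (fun y => W₂ y * u y) = f := by
    funext y
    by_cases h : f y = 0
    · simp [hW₂def, hudef, h]
    · have hy : (0:ℝ) < ‖f y‖ := norm_pos_iff.mpr h
      simp only [hW₂def, hudef, if_neg h]
      rw [← mul_assoc, ← Complex.ofReal_mul, ← Real.rpow_add hy,
        show (1 - pr/2) + (pr/2 - 1) = 0 by ring, Real.rpow_zero, Complex.ofReal_one, one_mul]
  have hW₂e : ∀ x, (‖W₂ x‖₊ : ℝ≥0∞) ^ rr = F x ^ pr := by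
    intro x
    have h0 : (0:ℝ) ≤ 1 - pr/2 := by linarith
    have : ‖W₂ x‖₊ = ‖f x‖₊ ^ (1 - pr/2) := by
      rw [hW₂def]
      simp only [Complex.nnnorm_real]
      rw [Real.nnnorm_rpow_of_nonneg (norm_nonneg _), nnnorm_norm]
    rw [this, ENNReal.coe_rpow_of_nonneg _ h0, ← ENNReal.rpow_mul, hkey1]
  have hue : ∀ x, (‖u x‖₊ : ℝ≥0∞) ^ (2:ℝ) = F x ^ pr := by
    intro x
    by_cases h : f x = 0
    · have : F x = 0 := by simp [hFdef, h]
      simp [hudef, h, this, ENNReal.zero_rpow_of_pos, hprpos,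
        ENNReal.zero_rpow_of_pos (show (0:ℝ) < 2 by norm_num)]
    · have hy : (0:ℝ) < ‖f x‖ := norm_pos_iff.mpr h
      have hFne : F x ≠ 0 := by simp [hFdef, h]
      have h1 : ‖u x‖₊ = ‖f x‖₊ ^ (pr/2 - 1) * ‖f x‖₊ := by
        rw [hudef]
        simp only [if_neg h, nnnorm_mul, Complex.nnnorm_real]
        rw [Real.nnnorm_rpow_of_nonneg (norm_nonneg _), nnnorm_norm]
      have hnn : ‖f x‖₊ ≠ 0 := by simpa using hy.ne'
      rw [h1, ENNReal.coe_mul, ENNReal.coe_rpow_of_ne_zero hnn]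
      rw [show ((‖f x‖₊ : ℝ≥0∞) ^ (pr/2 - 1) * (‖f x‖₊ : ℝ≥0∞))
          = (‖f x‖₊ : ℝ≥0∞) ^ (pr/2 - 1) * (‖f x‖₊ : ℝ≥0∞) ^ (1:ℝ) by rw [ENNReal.rpow_one],
        ← ENNReal.rpow_add _ _ hFne (hFt x), show pr/2 - 1 + 1 = pr/2 by ring,
        ← ENNReal.rpow_mul]
      norm_num
  have h2r : ((2:ℝ≥0∞)).toReal = (2:ℝ) := by norm_num
  have hW₂n : eLpNorm W₂ r Measure.count = S ^ (1/rr) := by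
    rw [elp hr0 hrt, tsum_congr hW₂e]
  have hun : eLpNorm u 2 Measure.count = S ^ (1/(2:ℝ)) := by
    rw [elp (by norm_num) (by norm_num), h2r, tsum_congr hue]
  have hfn : eLpNorm f p Measure.count = S ^ (1/pr) := by
    rw [elp hp0 hpt]
  by_cases hS0 : S = 0
  · have hf0 : f = 0 := by
      funext x
      have h := ENNReal.tsum_eq_zero.mp hS0 x
      rw [ENNReal.rpow_eq_zero_iff] at h
      rcases h with ⟨h, _⟩ | ⟨h, _⟩
      · simpa [hFdef] using h
      · exact absurd h (hFt x)
    rw [hf0, map_zero]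
    simpa using zero_le _
  by_cases hSt : S = ∞
  · rw [hfn, hSt, ENNReal.top_rpow_of_pos (by positivity), ENNReal.mul_top hC]
    exact le_top
  have key : ∀ W₁ : (Fin d → ℤ) → ℂ,
      eLpNorm (fun x => W₁ x * A f x) 2 Measure.count
        ≤ C * eLpNorm W₁ r Measure.count * S ^ (1/pr) := by
    intro W₁
    have h := hA W₁ W₂ u
    rw [show A (fun y => W₂ y * u y) = A f from congrArg A hfact, hW₂n, hun] at h
    calc eLpNorm (fun x => W₁ x * A f x) 2 Measure.count
        ≤ C * eLpNorm W₁ r Measure.count * S ^ (1/rr) * S ^ (1/(2:ℝ)) := h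
      _ = C * eLpNorm W₁ r Measure.count * S ^ (1/pr) := by
          rw [mul_assoc, ← ENNReal.rpow_add _ _ hS0 hSt,
            show 1/rr + 1/(2:ℝ) = 1/pr by rw [heq1]; ring]
  by_cases hp't : p' = ∞
  · rw [hp't, eLpNorm_exponent_top, eLpNormEssSup]
    refine essSup_le_of_ae_le _ (Filter.Eventually.of_forall fun x => ?_)
    have h := key (fun z => if z = x then 1 else 0)
    rw [elp_ind (by norm_num) (by norm_num) x (A f), elp_ind' hr0 hrt x, mul_one] at h
    rw [hfn]
    exact h
  -- p' finite
  set q := p'.toReal with hqdef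
  have hq0 : 0 < q := ENNReal.toReal_pos hp'0 hp't
  have heq2 : 1/pr + 1/q = 1 := by
    have h := congrArg ENNReal.toReal hp'
    rwa [ENNReal.toReal_add (by simp [ENNReal.div_eq_top, hpt, hp0])
        (by simp [ENNReal.div_eq_top, hp't, hp'0]),
      ENNReal.toReal_div, ENNReal.toReal_div] at h
    -- h : 1/pr + 1/q = 1 (toReal 1 = 1)
  have hkey4 : 1/q + 1/rr = 1/(2:ℝ) := by
    have : 1/q = 1 - 1/pr := by linarith
    rw [this, heq1]; ring
  have hkey3 : (q/2 - 1) * rr = q := by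
    have h4 := hkey4
    field_simp at h4
    nlinarith [hq0, hrrpos]
  rw [elp hp'0 hp't, hfn]
  set G : (Fin d → ℤ) → ℝ≥0∞ := fun x => ((‖A f x‖₊ : ℝ≥0∞)) with hGdef
  have hGt : ∀ x, G x ≠ ∞ := fun x => ENNReal.coe_ne_top
  suffices hsuff : (∑' x, G x ^ q) ≤ (C * S ^ (1/pr)) ^ q by
    calc (∑' x, G x ^ q) ^ (1/q) ≤ ((C * S ^ (1/pr)) ^ q) ^ (1/q) :=
          ENNReal.rpow_le_rpow hsuff (by positivity)
      _ = C * S ^ (1/pr) := by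
          rw [← ENNReal.rpow_mul, mul_one_div, div_self hq0.ne', ENNReal.rpow_one]
  rw [ENNReal.tsum_eq_iSup_sum]
  refine iSup_le fun s => ?_
  classical
  set W₁ : (Fin d → ℤ) → ℂ :=
    fun x => if x ∈ s ∧ A f x ≠ 0 then ((‖A f x‖ ^ (q/2 - 1) : ℝ) : ℂ) else 0 with hW₁def
  set T := ∑ x ∈ s, G x ^ q with hTdef
  have hTt : T ≠ ∞ := by
    rw [hTdef]
    exact (ENNReal.sum_lt_top.mpr fun x _ =>
      ENNReal.rpow_lt_top_of_nonneg hq0.le (hGt x)).ne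
  have hWpt : ∀ x, (‖W₁ x * A f x‖₊ : ℝ≥0∞) ^ (2:ℝ) = if x ∈ s then G x ^ q else 0 := by
    intro x
    by_cases hxs : x ∈ s
    · by_cases hg : A f x = 0
      · have : G x = 0 := by simp [hGdef, hg]
        simp [hW₁def, hg, this, hxs, ENNReal.zero_rpow_of_pos hq0,
          ENNReal.zero_rpow_of_pos (show (0:ℝ) < 2 by norm_num)]
      · have hy : (0:ℝ) < ‖A f x‖ := norm_pos_iff.mpr hg
        have hnn : ‖A f x‖₊ ≠ 0 := by simpa using hy.ne'
        have hGne : G x ≠ 0 := by simp [hGdef, hg]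
        have h1 : ‖W₁ x * A f x‖₊ = ‖A f x‖₊ ^ (q/2 - 1) * ‖A f x‖₊ := by
          rw [hW₁def]
          simp only [if_pos (And.intro hxs hg), nnnorm_mul, Complex.nnnorm_real]
          rw [Real.nnnorm_rpow_of_nonneg (norm_nonneg _), nnnorm_norm]
        rw [h1, if_pos hxs, ENNReal.coe_mul, ENNReal.coe_rpow_of_ne_zero hnn]
        rw [show ((‖A f x‖₊ : ℝ≥0∞) ^ (q/2 - 1) * (‖A f x‖₊ : ℝ≥0∞))
            = (‖A f x‖₊ : ℝ≥0∞) ^ (q/2 - 1) * (‖A f x‖₊ : ℝ≥0∞) ^ (1:ℝ) by rw [ENNReal.rpow_one],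
          ← ENNReal.rpow_add _ _ hGne (hGt x), show q/2 - 1 + 1 = q/2 by ring,
          ← ENNReal.rpow_mul]
        norm_num
    · simp [hW₁def, hxs, ENNReal.zero_rpow_of_pos (show (0:ℝ) < 2 by norm_num)]
  have hW₁pt : ∀ x, (‖W₁ x‖₊ : ℝ≥0∞) ^ rr = if x ∈ s then G x ^ q else 0 := by
    intro x
    by_cases hxs : x ∈ s
    · by_cases hg : A f x = 0
      · have : G x = 0 := by simp [hGdef, hg]
        simp [hW₁def, hg, this, hxs, ENNReal.zero_rpow_of_pos hq0,
          ENNReal.zero_rpow_of_pos hrrpos]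
      · have hy : (0:ℝ) < ‖A f x‖ := norm_pos_iff.mpr hg
        have hnn : ‖A f x‖₊ ≠ 0 := by simpa using hy.ne'
        have h1 : ‖W₁ x‖₊ = ‖A f x‖₊ ^ (q/2 - 1) := by
          rw [hW₁def]
          simp only [if_pos (And.intro hxs hg), Complex.nnnorm_real]
          rw [Real.nnnorm_rpow_of_nonneg (norm_nonneg _), nnnorm_norm]
        rw [h1, if_pos hxs, ENNReal.coe_rpow_of_ne_zero hnn, ← ENNReal.rpow_mul, hkey3]
    · simp [hW₁def, hxs, ENNReal.zero_rpow_of_pos hrrpos]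
  have htsum : ∀ (g : (Fin d → ℤ) → ℝ≥0∞), (∀ x, g x = if x ∈ s then G x ^ q else 0) →
      ∑' x, g x = T := by
    intro g hg
    rw [tsum_congr hg, tsum_eq_sum (s := s) (fun b hb => if_neg hb), hTdef]
    exact Finset.sum_congr rfl fun x hx => if_pos hx
  have hWgn : eLpNorm (fun x => W₁ x * A f x) 2 Measure.count = T ^ (1/(2:ℝ)) := by
    rw [elp (by norm_num) (by norm_num), h2r, htsum _ hWpt]
  have hW₁n : eLpNorm W₁ r Measure.count = T ^ (1/rr) := by
    rw [elp hr0 hrt, htsum _ hW₁pt]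
  have h := key W₁
  rw [hWgn, hW₁n] at h
  by_cases hT0 : T = 0
  · calc T ≤ 0 := le_of_eq hT0
      _ ≤ (C * S ^ (1/pr)) ^ q := zero_le
  · have hsplit : T ^ (1/(2:ℝ)) = T ^ (1/q) * T ^ (1/rr) := by
      rw [← ENNReal.rpow_add _ _ hT0 hTt, hkey4]
    rw [hsplit, show C * T ^ (1/rr) * S ^ (1/pr) = C * S ^ (1/pr) * T ^ (1/rr) by ring] at h
    have hTr0 : T ^ (1/rr) ≠ 0 := by
      simp [ENNReal.rpow_eq_zero_iff, hT0, hTt, hrrpos, one_div,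
        inv_pos.mpr hrrpos, not_lt.mpr (inv_pos.mpr hrrpos).le]
    have hTrt : T ^ (1/rr) ≠ ∞ := ENNReal.rpow_ne_top_of_nonneg (by positivity) hTt
    have h2 : T ^ (1/q) ≤ C * S ^ (1/pr) := (ENNReal.mul_le_mul_iff_left hTr0 hTrt).mp h
    calc T = (T ^ (1/q)) ^ q := by
          rw [← ENNReal.rpow_mul, one_div, inv_mul_cancel₀ hq0.ne', ENNReal.rpow_one]
      _ ≤ (C * S ^ (1/pr)) ^ q := ENNReal.rpow_le_rpow h2 hq0.le
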